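/- Let V be a finite-dimensional complex vector space, ρ : M_n(ℂ) → End(V) a unital ℂ-algebra homomorphism and ρ' : M_m(ℂ) → End(V) a unital ℂ-algebra antihomomorphism such that ρ(a)ρ'(b) = ρ'(b)ρ(a) for all a ∈ M_n(ℂ), b ∈ M_m(ℂ). Then there exists a natural number r ≥ 0 and a ℂ-linear isomorphism φ : V ≅ ℂⁿ ⊗ ℂʳ ⊗ ℂᵐ such that φ ∘ ρ(a) = (a ⊗ 1 ⊗ 1) ∘ φ and φ ∘ ρ'(b) = (1 ⊗ 1 ⊗ bᵀ) ∘ φ for all a ∈ M_n(ℂ) and b ∈ M_m(ℂ), where bᵀ denotes matrix transposition (V = 0 corresponding to r = 0). -/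

import Mathlib

open MulOpposite TensorProduct

namespace Stmt1Aux
set_option linter.unusedSectionVars false

lemma one_eq_sum (p : ℕ) : (1 : Matrix (Fin p) (Fin p) ℂ) = ∑ i, Matrix.single i i 1 := by
  ext i j
  rw [Matrix.sum_apply]
  by_cases h : i = j
  · simp [Matrix.one_apply, Matrix.single, h, Finset.sum_ite_eq]
  · have : ∀ x : Fin p, ¬(x = i ∧ x = j) := by rintro x ⟨rfl, rfl⟩; exact h rfl
    simp [Matrix.one_apply, Matrix.single, h, this]

lemma single_expand {p : ℕ} (x : Fin p → ℂ) : x = ∑ k, x k • (Pi.single k 1 : Fin p → ℂ) := by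
  funext l
  simp [Finset.sum_apply, Pi.single_apply, mul_ite, Finset.sum_ite_eq']

lemma mulE {n : ℕ} (a : Matrix (Fin n) (Fin n) ℂ) (i i0 : Fin n) :
    a * Matrix.single i i0 1 = ∑ l, a l i • Matrix.single l i0 1 := by
  ext p q
  simp [Matrix.mul_apply, Matrix.single, Matrix.sum_apply, mul_ite, ite_and,
    Finset.sum_ite_eq, Finset.sum_ite_eq']

lemma Emul {m : ℕ} (b : Matrix (Fin m) (Fin m) ℂ) (j0 j : Fin m) :
    Matrix.single j0 j 1 * b = ∑ l, b j l • Matrix.single j0 l 1 := by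
  ext p q
  simp [Matrix.mul_apply, Matrix.single, Matrix.sum_apply, mul_ite, ite_and,
    Finset.sum_ite_eq, Finset.sum_ite_eq']

variable {n m : ℕ} {V : Type*} [AddCommGroup V] [Module ℂ V]
variable (ρ : Matrix (Fin n) (Fin n) ℂ →ₐ[ℂ] Module.End ℂ V)
variable (ρ' : (Matrix (Fin m) (Fin m) ℂ)ᵐᵒᵖ →ₐ[ℂ] Module.End ℂ V)

noncomputable def L (i i' : Fin n) : Module.End ℂ V := ρ (Matrix.single i i' 1)
noncomputable def R (j j' : Fin m) : Module.End ℂ V := ρ' (op (Matrix.single j j' 1))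

lemma L_mul (a b c d : Fin n) : L ρ a b * L ρ c d = if b = c then L ρ a d else 0 := by
  rw [L, L, ← map_mul]
  by_cases h : b = c
  · subst h; rw [Matrix.single_mul_single_same, if_pos rfl, one_mul, L]
  · rw [Matrix.single_mul_single_of_ne (h := h), if_neg h, map_zero]

lemma R_mul (a b c d : Fin m) : R ρ' a b * R ρ' c d = if d = a then R ρ' c b else 0 := by
  rw [R, R, ← map_mul, ← op_mul]
  by_cases h : d = a
  · subst h; rw [Matrix.single_mul_single_same, if_pos rfl, one_mul, R]
  · rw [Matrix.single_mul_single_of_ne (h := h), if_neg h, op_zero, map_zero]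

lemma sum_L : ∑ i, L ρ i i = 1 := by
  rw [← map_one ρ, one_eq_sum, map_sum]; rfl

lemma sum_R : ∑ j, R ρ' j j = 1 := by
  have h1 : (op (∑ j, Matrix.single j j 1) : (Matrix (Fin m) (Fin m) ℂ)ᵐᵒᵖ)
      = ∑ j, op (Matrix.single j j 1) :=
    map_sum (opAddEquiv : Matrix (Fin m) (Fin m) ℂ ≃+ _) _ _
  have : ∑ j, R ρ' j j = ρ' (op (∑ j, Matrix.single j j 1)) := by
    rw [h1, map_sum]; rfl
  rw [this, ← one_eq_sum, op_one, map_one]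


variable (i0 : Fin n) (j0 : Fin m)

noncomputable def P : Module.End ℂ V := L ρ i0 i0 * R ρ' j0 j0

noncomputable def Wsub : Submodule ℂ V := LinearMap.range (P ρ ρ' i0 j0 : V →ₗ[ℂ] V)

variable [FiniteDimensional ℂ V]

noncomputable def rdim : ℕ := Module.finrank ℂ (Wsub ρ ρ' i0 j0)

noncomputable def bW : Module.Basis (Fin (rdim ρ ρ' i0 j0)) ℂ (Wsub ρ ρ' i0 j0) :=
  Module.finBasis ℂ _

noncomputable def psi :
    ((Fin n → ℂ) ⊗[ℂ] ((Fin (rdim ρ ρ' i0 j0) → ℂ) ⊗[ℂ] (Fin m → ℂ))) →ₗ[ℂ] V :=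
  ((Pi.basisFun ℂ (Fin n)).tensorProduct
    ((Pi.basisFun ℂ (Fin (rdim ρ ρ' i0 j0))).tensorProduct (Pi.basisFun ℂ (Fin m)))).constr ℂ
    (fun p => (L ρ p.1 i0 * R ρ' j0 p.2.2) ((bW ρ ρ' i0 j0 p.2.1 : V)))

lemma psi_single (i : Fin n) (k : Fin (rdim ρ ρ' i0 j0)) (j : Fin m) :
    psi ρ ρ' i0 j0 ((Pi.single i 1 : Fin n → ℂ) ⊗ₜ[ℂ]
      ((Pi.single k 1 : Fin (rdim ρ ρ' i0 j0) → ℂ) ⊗ₜ[ℂ] (Pi.single j 1 : Fin m → ℂ)))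
      = (L ρ i i0 * R ρ' j0 j) ((bW ρ ρ' i0 j0 k : V)) := by
  have := Module.Basis.constr_basis
    ((Pi.basisFun ℂ (Fin n)).tensorProduct
      ((Pi.basisFun ℂ (Fin (rdim ρ ρ' i0 j0))).tensorProduct (Pi.basisFun ℂ (Fin m)))) ℂ
    (fun p => (L ρ p.1 i0 * R ρ' j0 p.2.2) ((bW ρ ρ' i0 j0 p.2.1 : V))) (i, k, j)
  simpa [psi, Module.Basis.tensorProduct_apply, Pi.basisFun_apply] using this


variable (hcomm : ∀ (a : Matrix (Fin n) (Fin n) ℂ) (b : Matrix (Fin m) (Fin m) ℂ),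
      Commute (ρ a) (ρ' (op b)))

include hcomm in
lemma LR_comm (i i' : Fin n) (j j' : Fin m) :
    R ρ' j j' * L ρ i i' = L ρ i i' * R ρ' j j' := (hcomm _ _).symm

include hcomm in
lemma mix (a b : Fin n) (c d : Fin m) (e f : Fin n) (g h : Fin m) :
    (L ρ a b * R ρ' c d) * (L ρ e f * R ρ' g h) = (L ρ a b * L ρ e f) * (R ρ' c d * R ρ' g h) := by
  rw [mul_assoc, ← mul_assoc (R ρ' c d), LR_comm ρ ρ' hcomm, mul_assoc, ← mul_assoc]


include hcomm in
lemma P_idem : P ρ ρ' i0 j0 * P ρ ρ' i0 j0 = P ρ ρ' i0 j0 := by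
  rw [P, mix ρ ρ' hcomm, L_mul, R_mul]
  simp

include hcomm in
lemma P_fix (w : Wsub ρ ρ' i0 j0) : P ρ ρ' i0 j0 (w : V) = (w : V) := by
  obtain ⟨w, v, rfl⟩ := w
  show P ρ ρ' i0 j0 ((P ρ ρ' i0 j0 : V →ₗ[ℂ] V) v) = _
  rw [← Module.End.mul_apply, P_idem ρ ρ' i0 j0 hcomm]

include hcomm in
lemma mem_W (i : Fin n) (j : Fin m) (v : V) :
    (L ρ i0 i * R ρ' j j0) v ∈ Wsub ρ ρ' i0 j0 := by
  refine ⟨(L ρ i0 i * R ρ' j j0) v, ?_⟩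
  show (P ρ ρ' i0 j0 : V →ₗ[ℂ] V) _ = _
  rw [← Module.End.mul_apply]
  congr 1
  rw [P, mix ρ ρ' hcomm, L_mul, R_mul]
  simp

noncomputable def g (i : Fin n) (j : Fin m) : V →ₗ[ℂ] (Wsub ρ ρ' i0 j0) :=
  LinearMap.codRestrict _ (L ρ i0 i * R ρ' j j0 : V →ₗ[ℂ] V) (mem_W ρ ρ' i0 j0 hcomm i j)

lemma g_coe (i : Fin n) (j : Fin m) (v : V) :
    (g ρ ρ' i0 j0 hcomm i j v : V) = (L ρ i0 i * R ρ' j j0) v := rfl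

noncomputable def chi :
    V →ₗ[ℂ] ((Fin n → ℂ) ⊗[ℂ] ((Fin (rdim ρ ρ' i0 j0) → ℂ) ⊗[ℂ] (Fin m → ℂ))) :=
  ∑ i, ∑ j,
    (TensorProduct.mk ℂ (Fin n → ℂ) ((Fin (rdim ρ ρ' i0 j0) → ℂ) ⊗[ℂ] (Fin m → ℂ))
        (Pi.single i 1)) ∘ₗ
      ((TensorProduct.mk ℂ (Fin (rdim ρ ρ' i0 j0) → ℂ) (Fin m → ℂ)).flip
        (Pi.single j 1)) ∘ₗ
      ((bW ρ ρ' i0 j0).equivFun : Wsub ρ ρ' i0 j0 →ₗ[ℂ] (Fin (rdim ρ ρ' i0 j0) → ℂ)) ∘ₗ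
      g ρ ρ' i0 j0 hcomm i j

lemma chi_apply (v : V) :
    chi ρ ρ' i0 j0 hcomm v = ∑ i, ∑ j,
      (Pi.single i 1 : Fin n → ℂ) ⊗ₜ[ℂ]
        (((bW ρ ρ' i0 j0).equivFun (g ρ ρ' i0 j0 hcomm i j v)) ⊗ₜ[ℂ]
          (Pi.single j 1 : Fin m → ℂ)) := by
  simp [chi, LinearMap.sum_apply, TensorProduct.mk_apply, LinearMap.flip_apply]


lemma P_def : P ρ ρ' i0 j0 = L ρ i0 i0 * R ρ' j0 j0 := rfl

lemma bW_equivFun_self (k : Fin (rdim ρ ρ' i0 j0)) :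
    (bW ρ ρ' i0 j0).equivFun (bW ρ ρ' i0 j0 k) = Pi.single k 1 := by
  funext l
  rw [Module.Basis.equivFun_self]
  simp [Pi.single_apply, eq_comm]

include hcomm in
lemma psi_chi (v : V) : psi ρ ρ' i0 j0 (chi ρ ρ' i0 j0 hcomm v) = v := by
  rw [chi_apply]
  simp only [map_sum]
  have step : ∀ (i : Fin n) (j : Fin m),
      psi ρ ρ' i0 j0 ((Pi.single i 1 : Fin n → ℂ) ⊗ₜ[ℂ]
        (((bW ρ ρ' i0 j0).equivFun (g ρ ρ' i0 j0 hcomm i j v)) ⊗ₜ[ℂ]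
          (Pi.single j 1 : Fin m → ℂ))) = (L ρ i i * R ρ' j j) v := by
    intro i j
    set c := (bW ρ ρ' i0 j0).equivFun (g ρ ρ' i0 j0 hcomm i j v) with hcdef
    have hc : c = ∑ k, c k • (Pi.single k 1 : Fin (rdim ρ ρ' i0 j0) → ℂ) := single_expand c
    rw [hc]
    rw [TensorProduct.sum_tmul, TensorProduct.tmul_sum, map_sum]
    have hterm : ∀ k, psi ρ ρ' i0 j0 ((Pi.single i 1 : Fin n → ℂ) ⊗ₜ[ℂ]
        ((c k • (Pi.single k 1 : Fin (rdim ρ ρ' i0 j0) → ℂ)) ⊗ₜ[ℂ] (Pi.single j 1 : Fin m → ℂ)))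
        = c k • (L ρ i i0 * R ρ' j0 j) ((bW ρ ρ' i0 j0 k : V)) := by
      intro k
      rw [← TensorProduct.smul_tmul', TensorProduct.tmul_smul, map_smul, psi_single]
    rw [Finset.sum_congr rfl fun k _ => hterm k]
    have : ∑ k, c k • (L ρ i i0 * R ρ' j0 j) ((bW ρ ρ' i0 j0 k : V))
        = (L ρ i i0 * R ρ' j0 j) (∑ k, c k • (bW ρ ρ' i0 j0 k : V)) := by
      rw [map_sum]
      exact Finset.sum_congr rfl fun k _ => (map_smul _ _ _).symm
    rw [this]
    have hsum : ∑ k, c k • (bW ρ ρ' i0 j0 k : V) = ((g ρ ρ' i0 j0 hcomm i j v : V)) := by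
      have := (bW ρ ρ' i0 j0).sum_equivFun (g ρ ρ' i0 j0 hcomm i j v)
      calc ∑ k, c k • (bW ρ ρ' i0 j0 k : V)
          = ((∑ k, c k • bW ρ ρ' i0 j0 k : Wsub ρ ρ' i0 j0) : V) := by
            push_cast [Submodule.coe_sum]
            rfl
        _ = _ := by rw [this]
    rw [hsum, g_coe, ← Module.End.mul_apply, mix ρ ρ' hcomm, L_mul, R_mul, if_pos rfl, if_pos rfl]
  rw [Finset.sum_congr rfl fun i _ => Finset.sum_congr rfl fun j _ => step i j]
  have : ∑ i, ∑ j, (L ρ i i * R ρ' j j) v = (((∑ i, L ρ i i) * (∑ j, R ρ' j j)) : Module.End ℂ V) v := by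
    rw [Finset.sum_mul_sum]
    simp [LinearMap.sum_apply]
  rw [this, sum_L, sum_R, one_mul, Module.End.one_apply]


include hcomm in
lemma g_psi (i : Fin n) (k : Fin (rdim ρ ρ' i0 j0)) (j : Fin m) (i' : Fin n) (j' : Fin m) :
    g ρ ρ' i0 j0 hcomm i' j' ((L ρ i i0 * R ρ' j0 j) ((bW ρ ρ' i0 j0 k : V)))
      = if i' = i then (if j = j' then bW ρ ρ' i0 j0 k else 0) else 0 := by
  apply Subtype.ext
  rw [g_coe, ← Module.End.mul_apply, mix ρ ρ' hcomm, L_mul, R_mul]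
  by_cases h1 : i' = i <;> by_cases h2 : j = j' <;>
    simp only [h1, h2, if_pos, if_neg, if_true, if_false, ite_true, ite_false,
      zero_mul, mul_zero, LinearMap.zero_apply, Submodule.coe_zero]
  · rw [← P_def]
    exact P_fix ρ ρ' i0 j0 hcomm _
  all_goals simp [h1, h2]

include hcomm in
lemma chi_psi_single (i : Fin n) (k : Fin (rdim ρ ρ' i0 j0)) (j : Fin m) :
    chi ρ ρ' i0 j0 hcomm (psi ρ ρ' i0 j0 ((Pi.single i 1 : Fin n → ℂ) ⊗ₜ[ℂ]
      ((Pi.single k 1 : Fin (rdim ρ ρ' i0 j0) → ℂ) ⊗ₜ[ℂ] (Pi.single j 1 : Fin m → ℂ))))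
      = (Pi.single i 1 : Fin n → ℂ) ⊗ₜ[ℂ]
        ((Pi.single k 1 : Fin (rdim ρ ρ' i0 j0) → ℂ) ⊗ₜ[ℂ] (Pi.single j 1 : Fin m → ℂ)) := by
  rw [psi_single, chi_apply]
  have hterm : ∀ (i' : Fin n) (j' : Fin m),
      (Pi.single i' 1 : Fin n → ℂ) ⊗ₜ[ℂ]
        (((bW ρ ρ' i0 j0).equivFun (g ρ ρ' i0 j0 hcomm i' j'
          ((L ρ i i0 * R ρ' j0 j) ((bW ρ ρ' i0 j0 k : V))))) ⊗ₜ[ℂ] (Pi.single j' 1 : Fin m → ℂ))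
      = if i' = i then (if j = j' then
          (Pi.single i' 1 : Fin n → ℂ) ⊗ₜ[ℂ]
            ((Pi.single k 1 : Fin (rdim ρ ρ' i0 j0) → ℂ) ⊗ₜ[ℂ] (Pi.single j' 1 : Fin m → ℂ))
          else 0) else 0 := by
    intro i' j'
    rw [g_psi ρ ρ' i0 j0 hcomm i k j i' j', apply_ite (⇑(bW ρ ρ' i0 j0).equivFun),
      apply_ite (⇑(bW ρ ρ' i0 j0).equivFun), map_zero, bW_equivFun_self,
      TensorProduct.ite_tmul, TensorProduct.ite_tmul, TensorProduct.tmul_ite,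
      TensorProduct.tmul_ite]
  rw [Finset.sum_congr rfl fun i' _ => Finset.sum_congr rfl fun j' _ => hterm i' j']
  have hrow : ∀ i' : Fin n, (∑ j', if i' = i then (if j = j' then
      (Pi.single i' 1 : Fin n → ℂ) ⊗ₜ[ℂ]
        ((Pi.single k 1 : Fin (rdim ρ ρ' i0 j0) → ℂ) ⊗ₜ[ℂ] (Pi.single j' 1 : Fin m → ℂ))
      else 0) else 0)
      = if i' = i then (Pi.single i' 1 : Fin n → ℂ) ⊗ₜ[ℂ]
        ((Pi.single k 1 : Fin (rdim ρ ρ' i0 j0) → ℂ) ⊗ₜ[ℂ] (Pi.single j 1 : Fin m → ℂ)) else 0 := by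
    intro i'
    by_cases h1 : i' = i
    · simp [h1, Finset.sum_ite_eq]
    · simp [h1]
  rw [Finset.sum_congr rfl fun i' _ => hrow i']
  simp [Finset.sum_ite_eq']


lemma rho_psi (a : Matrix (Fin n) (Fin n) ℂ) :
    (ρ a : V →ₗ[ℂ] V) ∘ₗ psi ρ ρ' i0 j0
      = psi ρ ρ' i0 j0 ∘ₗ (TensorProduct.map (Matrix.toLin' a) LinearMap.id) := by
  apply Module.Basis.ext ((Pi.basisFun ℂ (Fin n)).tensorProduct
    ((Pi.basisFun ℂ (Fin (rdim ρ ρ' i0 j0))).tensorProduct (Pi.basisFun ℂ (Fin m))))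
  rintro ⟨i, k, j⟩
  simp only [Module.Basis.tensorProduct_apply, Pi.basisFun_apply, LinearMap.comp_apply]
  rw [psi_single]
  have hop : (ρ a : Module.End ℂ V) * (L ρ i i0 * R ρ' j0 j)
      = ∑ l, a l i • (L ρ l i0 * R ρ' j0 j) := by
    rw [← mul_assoc]
    have h1 : (ρ a : Module.End ℂ V) * L ρ i i0 = ∑ l, a l i • L ρ l i0 := by
      rw [L, ← map_mul, mulE, map_sum]
      exact Finset.sum_congr rfl fun l _ => by rw [map_smul]; rfl
    rw [h1, Finset.sum_mul]
    exact Finset.sum_congr rfl fun l _ => by rw [smul_mul_assoc]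
  have hv : Matrix.toLin' a (Pi.single i 1 : Fin n → ℂ)
      = ∑ l, a l i • (Pi.single l 1 : Fin n → ℂ) := by
    rw [Matrix.toLin'_apply, Matrix.mulVec_single]
    have := single_expand (fun l => a l i * 1)
    simp only [mul_one] at this; rw [op_one, one_smul]; exact this
  rw [TensorProduct.map_tmul, hv, LinearMap.id_apply, TensorProduct.sum_tmul, map_sum,
    ← Module.End.mul_apply, hop]
  simp only [LinearMap.sum_apply, LinearMap.smul_apply]
  exact Finset.sum_congr rfl fun l _ => by
    rw [← TensorProduct.smul_tmul', map_smul, psi_single]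

include hcomm in
lemma rho'_psi (b : Matrix (Fin m) (Fin m) ℂ) :
    (ρ' (op b) : V →ₗ[ℂ] V) ∘ₗ psi ρ ρ' i0 j0
      = psi ρ ρ' i0 j0 ∘ₗ (TensorProduct.map LinearMap.id
          (TensorProduct.map LinearMap.id (Matrix.toLin' b.transpose))) := by
  apply Module.Basis.ext ((Pi.basisFun ℂ (Fin n)).tensorProduct
    ((Pi.basisFun ℂ (Fin (rdim ρ ρ' i0 j0))).tensorProduct (Pi.basisFun ℂ (Fin m))))
  rintro ⟨i, k, j⟩
  simp only [Module.Basis.tensorProduct_apply, Pi.basisFun_apply, LinearMap.comp_apply]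
  rw [psi_single]
  have hopsum : (op (Matrix.single j0 j 1 * b) : (Matrix (Fin m) (Fin m) ℂ)ᵐᵒᵖ)
      = ∑ l, b j l • op (Matrix.single j0 l 1) := by
    rw [Emul]
    exact (map_sum (opAddEquiv : Matrix (Fin m) (Fin m) ℂ ≃+ _) _ _).trans
      (Finset.sum_congr rfl fun l _ => by
        rw [← MulOpposite.op_smul]; rfl)
  have hop : (ρ' (op b) : Module.End ℂ V) * (L ρ i i0 * R ρ' j0 j)
      = ∑ l, b j l • (L ρ i i0 * R ρ' j0 l) := by
    have hsw : (ρ' (op b) : Module.End ℂ V) * L ρ i i0 = L ρ i i0 * ρ' (op b) :=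
      ((hcomm (Matrix.single i i0 1) b).symm).eq
    rw [← mul_assoc, hsw, mul_assoc]
    have h1 : (ρ' (op b) : Module.End ℂ V) * R ρ' j0 j = ∑ l, b j l • R ρ' j0 l := by
      rw [R, ← map_mul, ← op_mul, hopsum, map_sum]
      exact Finset.sum_congr rfl fun l _ => by rw [map_smul]; rfl
    rw [h1, Finset.mul_sum]
    exact Finset.sum_congr rfl fun l _ => by rw [mul_smul_comm]
  have hv : Matrix.toLin' b.transpose (Pi.single j 1 : Fin m → ℂ)
      = ∑ l, b j l • (Pi.single l 1 : Fin m → ℂ) := by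
    rw [Matrix.toLin'_apply, Matrix.mulVec_single]
    have := single_expand (fun l => b.transpose l j * 1)
    simp only [mul_one, Matrix.transpose_apply] at this; rw [op_one, one_smul]; exact this
  rw [TensorProduct.map_tmul, TensorProduct.map_tmul, hv, LinearMap.id_apply,
    LinearMap.id_apply, TensorProduct.tmul_sum, TensorProduct.tmul_sum, map_sum,
    ← Module.End.mul_apply, hop]
  simp only [LinearMap.sum_apply, LinearMap.smul_apply]
  exact Finset.sum_congr rfl fun l _ => by
    rw [TensorProduct.tmul_smul, TensorProduct.tmul_smul, map_smul, psi_single]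

end Stmt1Aux
open Matrix Stmt1Aux in
theorem stmt_1 (n m : ℕ) (V : Type*) [AddCommGroup V] [Module ℂ V] [FiniteDimensional ℂ V]
    (ρ : Matrix (Fin n) (Fin n) ℂ →ₐ[ℂ] Module.End ℂ V)
    (ρ' : (Matrix (Fin m) (Fin m) ℂ)ᵐᵒᵖ →ₐ[ℂ] Module.End ℂ V)
    (hcomm : ∀ (a : Matrix (Fin n) (Fin n) ℂ) (b : Matrix (Fin m) (Fin m) ℂ),
      Commute (ρ a) (ρ' (op b))) :
    ∃ (r : ℕ)
      (φ : V ≃ₗ[ℂ] (Fin n → ℂ) ⊗[ℂ] ((Fin r → ℂ) ⊗[ℂ] (Fin m → ℂ))),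
      (∀ a : Matrix (Fin n) (Fin n) ℂ,
        φ.toLinearMap ∘ₗ (ρ a : V →ₗ[ℂ] V) =
          (TensorProduct.map (Matrix.toLin' a) LinearMap.id) ∘ₗ φ.toLinearMap) ∧
      (∀ b : Matrix (Fin m) (Fin m) ℂ,
        φ.toLinearMap ∘ₗ (ρ' (op b) : V →ₗ[ℂ] V) =
          (TensorProduct.map LinearMap.id
            (TensorProduct.map LinearMap.id (Matrix.toLin' b.transpose))) ∘ₗ φ.toLinearMap) := by
  classical
  by_cases hn : n = 0
  · subst hn
    have h10 : (1 : Matrix (Fin 0) (Fin 0) ℂ) = 0 := by ext i; exact i.elim0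
    have hend : (1 : Module.End ℂ V) = 0 := by rw [← map_one ρ, h10, map_zero]
    haveI hV : Subsingleton V := ⟨fun a b => by
      have ha := congrArg (fun f : Module.End ℂ V => f a) hend
      have hb := congrArg (fun f : Module.End ℂ V => f b) hend
      simp only [Module.End.one_apply, LinearMap.zero_apply] at ha hb
      rw [ha, hb]⟩
    exact ⟨0, LinearEquiv.ofSubsingleton _ _,
      fun a => LinearMap.ext fun v => Subsingleton.elim _ _,
      fun b => LinearMap.ext fun v => Subsingleton.elim _ _⟩
  by_cases hm : m = 0
  · subst hm
    have hend : (1 : Module.End ℂ V) = 0 := by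
      rw [← map_one ρ']
      have h1 : (1 : (Matrix (Fin 0) (Fin 0) ℂ)ᵐᵒᵖ) = 0 := Subsingleton.elim _ _
      rw [h1, map_zero]
    haveI hV : Subsingleton V := ⟨fun a b => by
      have ha := congrArg (fun f : Module.End ℂ V => f a) hend
      have hb := congrArg (fun f : Module.End ℂ V => f b) hend
      simp only [Module.End.one_apply, LinearMap.zero_apply] at ha hb
      rw [ha, hb]⟩
    exact ⟨0, LinearEquiv.ofSubsingleton _ _,
      fun a => LinearMap.ext fun v => Subsingleton.elim _ _,
      fun b => LinearMap.ext fun v => Subsingleton.elim _ _⟩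
  · set i0 : Fin n := ⟨0, Nat.pos_of_ne_zero hn⟩
    set j0 : Fin m := ⟨0, Nat.pos_of_ne_zero hm⟩
    have h1 : chi ρ ρ' i0 j0 hcomm ∘ₗ psi ρ ρ' i0 j0 = LinearMap.id := by
      apply Module.Basis.ext ((Pi.basisFun ℂ (Fin n)).tensorProduct
        ((Pi.basisFun ℂ (Fin (rdim ρ ρ' i0 j0))).tensorProduct (Pi.basisFun ℂ (Fin m))))
      rintro ⟨i, k, j⟩
      simp only [Module.Basis.tensorProduct_apply, Pi.basisFun_apply, LinearMap.comp_apply,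
        LinearMap.id_apply]
      exact chi_psi_single ρ ρ' i0 j0 hcomm i k j
    have h2 : psi ρ ρ' i0 j0 ∘ₗ chi ρ ρ' i0 j0 hcomm = LinearMap.id :=
      LinearMap.ext fun v => psi_chi ρ ρ' i0 j0 hcomm v
    have hcpsi : ∀ x, chi ρ ρ' i0 j0 hcomm (psi ρ ρ' i0 j0 x) = x := fun x => by
      have := LinearMap.congr_fun h1 x
      simpa using this
    refine ⟨rdim ρ ρ' i0 j0,
      LinearEquiv.ofLinear (chi ρ ρ' i0 j0 hcomm) (psi ρ ρ' i0 j0) h1 h2, ?_, ?_⟩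
    · intro a
      apply LinearMap.ext
      intro v
      simp only [LinearMap.comp_apply, LinearEquiv.coe_coe, LinearEquiv.ofLinear_apply,
        LinearEquiv.ofLinear_toLinearMap]
      have key := LinearMap.congr_fun (rho_psi ρ ρ' i0 j0 a) (chi ρ ρ' i0 j0 hcomm v)
      simp only [LinearMap.comp_apply] at key
      calc chi ρ ρ' i0 j0 hcomm ((ρ a) v)
          = chi ρ ρ' i0 j0 hcomm ((ρ a) (psi ρ ρ' i0 j0 (chi ρ ρ' i0 j0 hcomm v))) := by
            rw [psi_chi ρ ρ' i0 j0 hcomm v]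
        _ = chi ρ ρ' i0 j0 hcomm (psi ρ ρ' i0 j0
              ((TensorProduct.map (Matrix.toLin' a) LinearMap.id)
                (chi ρ ρ' i0 j0 hcomm v))) := by rw [key]
        _ = (TensorProduct.map (Matrix.toLin' a) LinearMap.id) (chi ρ ρ' i0 j0 hcomm v) :=
            hcpsi _
    · intro b
      apply LinearMap.ext
      intro v
      simp only [LinearMap.comp_apply, LinearEquiv.coe_coe, LinearEquiv.ofLinear_apply,
        LinearEquiv.ofLinear_toLinearMap]
      have key := LinearMap.congr_fun (rho'_psi ρ ρ' i0 j0 hcomm b) (chi ρ ρ' i0 j0 hcomm v)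
      simp only [LinearMap.comp_apply] at key
      calc chi ρ ρ' i0 j0 hcomm ((ρ' (op b)) v)
          = chi ρ ρ' i0 j0 hcomm ((ρ' (op b)) (psi ρ ρ' i0 j0 (chi ρ ρ' i0 j0 hcomm v))) := by
            rw [psi_chi ρ ρ' i0 j0 hcomm v]
        _ = chi ρ ρ' i0 j0 hcomm (psi ρ ρ' i0 j0
              ((TensorProduct.map LinearMap.id
                (TensorProduct.map LinearMap.id (Matrix.toLin' b.transpose)))
                (chi ρ ρ' i0 j0 hcomm v))) := by rw [key]
        _ = _ := hcpsi _
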